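/- Let G be a locally noetherian Grothendieck category. Then the map from the atom spectrum of G to the set of isomorphism classes of indecomposable injective objects, sending the atom [X] of a monoform object X to E(X), is a bijection. -/

import Mathlib

open CategoryTheory Category Limits

universe v u

/-- A Grothendieck category: an abelian category with (small) colimits, exact filtered
colimits (AB5) and a separator. -/
class GrothendieckCategory (C : Type u) [Category.{v} C] [Abelian C] : Prop where
  hasColimits : Limits.HasColimits C
  hasFilteredColimits : Limits.HasFilteredColimits C
  ab5 : @AB5 C _ hasFilteredColimits
  hasSeparator : HasSeparator C

/-- A Grothendieck category is locally noetherian if it has a generating (separating) set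
of noetherian objects. -/
def LocallyNoetherian (C : Type u) [Category.{v} C] [Abelian C] : Prop :=
  ∃ 𝒢 : Set C, ObjectProperty.IsSeparating (fun X => X ∈ 𝒢) ∧ ∀ G ∈ 𝒢, IsNoetherianObject G

/-- An object `X` is monoform if for every subobject `H` of `X`, every nonzero morphism
`H ⟶ X` is a monomorphism. -/
def Monoform {C : Type u} [Category.{v} C] [Abelian C] (X : C) : Prop :=
  ∀ ⦃H : C⦄ (i : H ⟶ X), Mono i → ∀ f : H ⟶ X, f ≠ 0 → Mono f

/-- Two objects are atom-equivalent if there is a nonzero object admitting monomorphisms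
into both. -/
def AtomEquiv {C : Type u} [Category.{v} C] [Abelian C] (X X' : C) : Prop :=
  ∃ (H : C) (f : H ⟶ X) (g : H ⟶ X'), ¬ IsZero H ∧ Mono f ∧ Mono g

/-- `u : X ⟶ E` is an injective envelope of `X`: `E` is injective and `u` is an essential
monomorphism. -/
def IsInjectiveEnvelope {C : Type u} [Category.{v} C] [Abelian C]
    {X E : C} (u : X ⟶ E) : Prop :=
  Injective E ∧ Mono u ∧ ∀ ⦃Y : C⦄ (g : E ⟶ Y), Mono (u ≫ g) → Mono g

/-- An object is indecomposable if it is nonzero and admits no decomposition as a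
biproduct of two nonzero objects. -/
def IndecomposableObj {C : Type u} [Category.{v} C] [Abelian C] (E : C) : Prop :=
  ¬ IsZero E ∧ ∀ Y Z : C, Nonempty (E ≅ Y ⊞ Z) → IsZero Y ∨ IsZero Z

namespace AtomProof

variable {C : Type u} [Category.{v} C] [Abelian C]

/-- A mono which is zero has zero source. -/
lemma isZero_of_mono_eq_zero {A X : C} (f : A ⟶ X) (hf : Mono f) (h : f = 0) : IsZero A := by
  rw [IsZero.iff_id_eq_zero]
  haveI := hf
  apply (cancel_mono f).1
  simp [h]

/-- Two monos into a common object "meet" if a nonzero object maps to both compatibly,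
monomorphically into the first. -/
def Meets {Z A B : C} (f : A ⟶ Z) (g : B ⟶ Z) : Prop :=
  ∃ (S : C) (s₁ : S ⟶ A) (s₂ : S ⟶ B), ¬ IsZero S ∧ Mono s₁ ∧ s₁ ≫ f = s₂ ≫ g

lemma mono_comp_cokernelπ_of_isZero_pullback {A M X : C} (f : A ⟶ X) (m : M ⟶ X)
    [Mono f] [Mono m] (hz : IsZero (pullback f m)) : Mono (f ≫ cokernel.π m) := by
  apply Preadditive.mono_of_cancel_zero
  intro T h hh
  have hh' : (h ≫ f) ≫ cokernel.π m = 0 := by simpa using hh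
  have hk : Abelian.monoLift m (h ≫ f) hh' ≫ m = h ≫ f := Abelian.monoLift_comp _ _ _
  have hl : pullback.lift h (Abelian.monoLift m (h ≫ f) hh') hk.symm ≫ pullback.fst f m = h :=
    pullback.lift_fst _ _ _
  rw [← hl, hz.eq_of_tgt (pullback.lift _ _ _) 0, zero_comp]

lemma mono_comp_cokernelπ_congr {A E M M' : C} (a : A ⟶ E) (m : M ⟶ E) (m' : M' ⟶ E)
    [Mono m] [Mono m'] (θ : M' ≅ M) (hθ : θ.hom ≫ m = m') :
    Mono (a ≫ cokernel.π m) ↔ Mono (a ≫ cokernel.π m') := by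
  subst hθ
  have e1 : (a ≫ cokernel.π (θ.hom ≫ m)) ≫ (cokernelEpiComp θ.hom m).hom =
      a ≫ cokernel.π m := by
    simp [cokernelEpiComp]
  have e2 : a ≫ cokernel.π (θ.hom ≫ m) =
      (a ≫ cokernel.π m) ≫ (cokernelEpiComp θ.hom m).inv := by
    rw [← e1]; simp
  constructor
  · intro h
    rw [e2]
    haveI : Mono (a ≫ cokernel.π m) := h
    exact mono_comp _ _
  · intro h
    rw [← e1]
    haveI : Mono (a ≫ cokernel.π (θ.hom ≫ m)) := h
    exact mono_comp _ _

/-- If every nonzero subobject of `E` meets `u`, then `u` is an essential extension. -/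
lemma essential_of_meets {X E : C} (u : X ⟶ E)
    (hm : ∀ ⦃B : C⦄ (j : B ⟶ E), Mono j → ¬ IsZero B → Meets u j) :
    ∀ ⦃Y : C⦄ (g : E ⟶ Y), Mono (u ≫ g) → Mono g := by
  intro Y g hg
  have hker : IsZero (kernel g) := by
    by_contra hker
    obtain ⟨S, s₁, s₂, hS, hs₁, hcomm⟩ := hm (kernel.ι g) inferInstance hker
    have hz0 : s₁ ≫ (u ≫ g) = 0 := by
      rw [← assoc, hcomm, assoc, kernel.condition, comp_zero]
    haveI := hg
    exact hS (isZero_of_mono_eq_zero s₁ hs₁ (zero_of_comp_mono (u ≫ g) hz0))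
  exact Preadditive.mono_of_isZero_kernel _ hker

/-- An essential extension meets every nonzero subobject. -/
lemma pullback_nonzero_of_essential {X E : C} (u : X ⟶ E) [Mono u]
    (hess : ∀ ⦃Y : C⦄ (g : E ⟶ Y), Mono (u ≫ g) → Mono g)
    {B : C} (j : B ⟶ E) [Mono j] (hB : ¬ IsZero B) : ¬ IsZero (pullback u j) := by
  intro hz
  have h1 : Mono (u ≫ cokernel.π j) := mono_comp_cokernelπ_of_isZero_pullback u j hz
  have h2 : Mono (cokernel.π j) := hess _ h1
  have : j ≫ cokernel.π j = 0 := cokernel.condition j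
  exact hB (isZero_of_mono_eq_zero j inferInstance (zero_of_comp_mono _ this))

/-- Monoform objects are uniform: any two nonzero subobjects intersect. -/
lemma monoform_pullback_nonzero {X A B : C} (hX : Monoform X) (a : A ⟶ X) (b : B ⟶ X)
    [Mono a] [Mono b] (hA : ¬ IsZero A) (hB : ¬ IsZero B) : ¬ IsZero (pullback a b) := by
  intro hz
  have hφ : Mono (biprod.desc a b) := by
    apply Preadditive.mono_of_cancel_zero
    intro T h hh
    have hsum : (h ≫ biprod.fst) ≫ a + (h ≫ biprod.snd) ≫ b = 0 := by
      have hld := biprod.lift_desc (f := h ≫ biprod.fst) (g := h ≫ biprod.snd) (h := a) (i := b)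
      rw [← hld]
      have hl : biprod.lift (h ≫ biprod.fst) (h ≫ biprod.snd) = h := by
        apply biprod.hom_ext <;> simp
      rw [hl, hh]
    have h1 : (h ≫ biprod.fst) ≫ a = (-(h ≫ biprod.snd)) ≫ b := by
      rw [Preadditive.neg_comp]
      exact eq_neg_of_add_eq_zero_left hsum
    have hl0 : pullback.lift _ _ h1 = 0 := hz.eq_of_tgt _ 0
    have hf : h ≫ biprod.fst = 0 := by
      rw [← pullback.lift_fst _ _ h1, hl0, zero_comp]
    have hs : h ≫ biprod.snd = 0 := by
      have := pullback.lift_snd _ _ h1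
      rw [hl0, zero_comp] at this
      have := this.symm
      rwa [neg_eq_zero] at this
    apply biprod.hom_ext <;> simp [hf, hs]
  have hψ : Mono ((biprod.fst : A ⊞ B ⟶ A) ≫ a) := by
    apply hX (biprod.desc a b) hφ
    intro h0
    apply hA
    apply isZero_of_mono_eq_zero a inferInstance
    have hia : biprod.inl ≫ (biprod.fst : A ⊞ B ⟶ A) ≫ a = a := by simp
    rw [← hia, h0, comp_zero]
  have hinr : (biprod.inr : B ⟶ A ⊞ B) ≫ (biprod.fst : A ⊞ B ⟶ A) ≫ a = 0 := by simp
  haveI := hψ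
  have hinr0 : (biprod.inr : B ⟶ A ⊞ B) = 0 :=
    zero_of_comp_mono ((biprod.fst : A ⊞ B ⟶ A) ≫ a) hinr
  apply hB
  rw [IsZero.iff_id_eq_zero]
  rw [← biprod.inr_snd (X := A) (Y := B), hinr0, zero_comp]

/-- Uniqueness of injective envelopes. -/
lemma envelope_iso {H E E' : C} (u : H ⟶ E) (u' : H ⟶ E')
    (hu : IsInjectiveEnvelope u) (hu' : IsInjectiveEnvelope u') : Nonempty (E ≅ E') := by
  obtain ⟨hEinj, huM, huE⟩ := hu
  obtain ⟨hE'inj, hu'M, hu'E⟩ := hu'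
  haveI := hEinj; haveI := hE'inj; haveI := huM; haveI := hu'M
  let φ : E ⟶ E' := Injective.factorThru u' u
  have hφ : u ≫ φ = u' := Injective.comp_factorThru u' u
  have hφM : Mono φ := huE φ (by rw [hφ]; exact hu'M)
  haveI := hφM
  let ψ : E' ⟶ E := Injective.factorThru (𝟙 E) φ
  have hψ : φ ≫ ψ = 𝟙 E := Injective.comp_factorThru (𝟙 E) φ
  have hψM : Mono ψ := hu'E ψ (by
    have : u' ≫ ψ = u := by rw [← hφ, assoc, hψ, comp_id]
    rw [this]; exact huM)
  haveI := hψM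
  haveI : IsSplitEpi ψ := ⟨⟨⟨φ, hψ⟩⟩⟩
  haveI : IsIso ψ := isIso_of_mono_of_epi ψ
  exact ⟨(asIso ψ).symm⟩

/-- Part 1 of the main theorem. -/
lemma part1 {X X' E E' : C} (u : X ⟶ E) (u' : X' ⟶ E')
    (hX : Monoform X) (hX0 : ¬ IsZero X) (hX' : Monoform X') (hX'0 : ¬ IsZero X')
    (hu : IsInjectiveEnvelope u) (hu' : IsInjectiveEnvelope u') :
    AtomEquiv X X' ↔ Nonempty (E ≅ E') := by
  obtain ⟨hEinj, huM, huE⟩ := id hu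
  obtain ⟨hE'inj, hu'M, hu'E⟩ := id hu'
  haveI := huM; haveI := hu'M
  constructor
  · rintro ⟨H, f, g, hH, hf, hg⟩
    haveI := hf; haveI := hg
    -- E is an injective envelope of H via f ≫ u
    have envE : IsInjectiveEnvelope (f ≫ u) := by
      refine ⟨hEinj, mono_comp _ _, essential_of_meets _ ?_⟩
      intro B j hj hB
      haveI := hj
      have hP : ¬ IsZero (pullback u j) := pullback_nonzero_of_essential u huE j hB
      have hQ : ¬ IsZero (pullback f (pullback.fst u j)) :=
        monoform_pullback_nonzero hX f (pullback.fst u j) hH hP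
      refine ⟨pullback f (pullback.fst u j), pullback.fst f (pullback.fst u j),
        pullback.snd f (pullback.fst u j) ≫ pullback.snd u j, hQ, inferInstance, ?_⟩
      rw [← assoc, pullback.condition, assoc, assoc, pullback.condition, ← assoc, assoc]
    have envE' : IsInjectiveEnvelope (g ≫ u') := by
      refine ⟨hE'inj, mono_comp _ _, essential_of_meets _ ?_⟩
      intro B j hj hB
      haveI := hj
      have hP : ¬ IsZero (pullback u' j) := pullback_nonzero_of_essential u' hu'E j hB
      have hQ : ¬ IsZero (pullback g (pullback.fst u' j)) :=
        monoform_pullback_nonzero hX' g (pullback.fst u' j) hH hP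
      refine ⟨pullback g (pullback.fst u' j), pullback.fst g (pullback.fst u' j),
        pullback.snd g (pullback.fst u' j) ≫ pullback.snd u' j, hQ, inferInstance, ?_⟩
      rw [← assoc, pullback.condition, assoc, assoc, pullback.condition, ← assoc, assoc]
    exact envelope_iso _ _ envE envE'
  · rintro ⟨e⟩
    haveI : Mono (u ≫ e.hom) := mono_comp _ _
    have hP : ¬ IsZero (pullback u' (u ≫ e.hom)) :=
      pullback_nonzero_of_essential u' hu'E (u ≫ e.hom) hX0
    exact ⟨pullback u' (u ≫ e.hom), pullback.snd u' (u ≫ e.hom),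
      pullback.fst u' (u ≫ e.hom), hP, inferInstance, inferInstance⟩

end AtomProof

namespace AtomProof

variable {C : Type u} [Category.{v} C] [Abelian C]

section AB5Chain

variable {J : Type v} [SmallCategory J] [IsFiltered J]

/-- The constant cocone over a filtered category is a colimit cocone. -/
noncomputable def constCoconeIsColimit (A : C) :
    IsColimit (⟨A, 𝟙 ((Functor.const J).obj A)⟩ : Cocone ((Functor.const J).obj A)) := by
  have hne : Nonempty J := IsFiltered.nonempty
  have hconst : ∀ (s : Cocone ((Functor.const J).obj A)) (j j' : J),
      s.ι.app j = s.ι.app j' := by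
    intro s j j'
    have h1 := s.ι.naturality (IsFiltered.leftToMax j j')
    have h2 := s.ι.naturality (IsFiltered.rightToMax j j')
    simp only [Functor.const_obj_obj, Functor.const_obj_map, id_comp, comp_id] at h1 h2
    rw [← h1, ← h2]
  exact
    { desc := fun s => s.ι.app hne.some
      fac := fun s j => by
        dsimp
        rw [id_comp]
        exact hconst s hne.some j
      uniq := fun s m hm => by
        have h := hm hne.some
        dsimp at h
        rwa [id_comp] at h }

variable [HasColimitsOfShape J C]

/-- Filtered colimits of subobjects of `E` give monos into `E`, assuming AB5. -/
lemma ab5_mono_desc [PreservesFiniteLimits (colim (J := J) (C := C))]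
    {E : C} (F : J ⥤ C) (τ : F ⟶ (Functor.const J).obj E) (hτ : ∀ j, Mono (τ.app j)) :
    Mono (colimit.desc F ⟨E, τ⟩) := by
  haveI := hτ
  haveI : Mono τ := NatTrans.mono_of_mono_app τ
  haveI : Mono (colim.map τ) := (colim (J := J) (C := C)).map_mono τ
  set isoE : colimit ((Functor.const J).obj E) ≅ E :=
    (colimit.isColimit _).coconePointUniqueUpToIso (constCoconeIsColimit E) with hisoE
  have hcompE : ∀ j, colimit.ι ((Functor.const J).obj E) j ≫ isoE.hom = 𝟙 E := fun j =>
    (colimit.isColimit _).comp_coconePointUniqueUpToIso_hom (constCoconeIsColimit E) j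
  have key : colimit.desc F ⟨E, τ⟩ = colim.map τ ≫ isoE.hom := by
    apply colimit.hom_ext
    intro j
    have e1 : colimit.ι F j ≫ colimit.desc F ⟨E, τ⟩ = τ.app j := colimit.ι_desc _ _
    have h1 : (colim.map τ : colimit F ⟶ _) = colimMap τ := rfl
    rw [e1, h1, ← assoc, ι_colimMap, assoc, hcompE j]
    simp
  rw [key]
  exact mono_comp _ _

/-- Under AB5, if `a` is disjoint from every member of a filtered system of subobjects,
it is disjoint from the colimit. -/
lemma ab5_disjoint_desc [PreservesFiniteLimits (colim (J := J) (C := C))]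
    {E : C} (F : J ⥤ C) (τ : F ⟶ (Functor.const J).obj E) (hτ : ∀ j, Mono (τ.app j))
    {A : C} (a : A ⟶ E) (h : ∀ j, Mono (a ≫ cokernel.π (τ.app j))) :
    Mono (a ≫ cokernel.π (colimit.desc F ⟨E, τ⟩)) := by
  have hne : Nonempty J := IsFiltered.nonempty
  set w := colimit.desc F ⟨E, τ⟩ with hwdef
  have hτw : ∀ j, colimit.ι F j ≫ w = τ.app j := fun j => colimit.ι_desc _ j
  have hτnat : ∀ {j k : J} (f : j ⟶ k), τ.app j = F.map f ≫ τ.app k := by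
    intro j k f
    have h0 := τ.naturality f
    simpa using h0
  let Q : J ⥤ C :=
    { obj := fun j => cokernel (τ.app j)
      map := fun {j k} f => cokernel.desc _ (cokernel.π (τ.app k))
        (by rw [hτnat f, assoc, cokernel.condition, comp_zero])
      map_id := fun j => (cancel_epi (cokernel.π (τ.app j))).1 (by simp)
      map_comp := fun {j k l} f g => (cancel_epi (cokernel.π (τ.app j))).1 (by simp) }
  have hQπ : ∀ {j k : J} (f : j ⟶ k),
      cokernel.π (τ.app j) ≫ Q.map f = cokernel.π (τ.app k) := by
    intro j k f
    exact cokernel.π_desc _ _ _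
  let QC : Cocone Q :=
    { pt := cokernel w
      ι :=
        { app := fun j => cokernel.desc _ (cokernel.π w)
            (by rw [← hτw j, assoc, cokernel.condition, comp_zero])
          naturality := fun j k f => (cancel_epi (cokernel.π (τ.app j))).1 (by
            rw [← assoc, hQπ f, cokernel.π_desc]
            simp) } }
  have hQCπ : ∀ j, cokernel.π (τ.app j) ≫ QC.ι.app j = cokernel.π w := by
    intro j
    exact cokernel.π_desc _ _ _
  have hconstQ : ∀ (s : Cocone Q) (j j' : J),
      cokernel.π (τ.app j) ≫ s.ι.app j = cokernel.π (τ.app j') ≫ s.ι.app j' := by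
    intro s j j'
    have h1 := s.w (IsFiltered.leftToMax j j')
    have h2 := s.w (IsFiltered.rightToMax j j')
    calc cokernel.π (τ.app j) ≫ s.ι.app j
        = (cokernel.π (τ.app j) ≫ Q.map (IsFiltered.leftToMax j j')) ≫
            s.ι.app (IsFiltered.max j j') := by rw [assoc, h1]
      _ = cokernel.π (τ.app (IsFiltered.max j j')) ≫ s.ι.app (IsFiltered.max j j') := by
            rw [hQπ]
      _ = (cokernel.π (τ.app j') ≫ Q.map (IsFiltered.rightToMax j j')) ≫
            s.ι.app (IsFiltered.max j j') := by rw [hQπ]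
      _ = cokernel.π (τ.app j') ≫ s.ι.app j' := by rw [assoc, h2]
  let QisColim : IsColimit QC :=
    { desc := fun s => cokernel.desc w (cokernel.π (τ.app hne.some) ≫ s.ι.app hne.some)
        (by
          apply colimit.hom_ext
          intro j
          rw [comp_zero, ← assoc, hτw j, ← hconstQ s j hne.some, ← assoc,
            cokernel.condition, zero_comp])
      fac := fun s j => by
        apply (cancel_epi (cokernel.π (τ.app j))).1
        rw [← assoc, hQCπ j, cokernel.π_desc, hconstQ s hne.some j]
      uniq := fun s m hm => by
        apply (cancel_epi (cokernel.π w)).1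
        rw [cokernel.π_desc, ← hQCπ hne.some, assoc, hm hne.some] }
  set isoQ : colimit Q ≅ cokernel w :=
    (colimit.isColimit Q).coconePointUniqueUpToIso QisColim with hisoQ
  have hcompQ : ∀ j, colimit.ι Q j ≫ isoQ.hom = QC.ι.app j := fun j =>
    (colimit.isColimit Q).comp_coconePointUniqueUpToIso_hom QisColim j
  let κ : (Functor.const J).obj A ⟶ Q :=
    { app := fun j => a ≫ cokernel.π (τ.app j)
      naturality := fun j k f => by
        have e : (a ≫ cokernel.π (τ.app j)) ≫ Q.map f = a ≫ cokernel.π (τ.app k) := by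
          rw [assoc, hQπ f]
        show ((Functor.const J).obj A).map f ≫ (a ≫ cokernel.π (τ.app k)) =
          (a ≫ cokernel.π (τ.app j)) ≫ Q.map f
        rw [e]
        exact id_comp _ }
  haveI : ∀ j, Mono (κ.app j) := fun j => h j
  haveI : Mono κ := NatTrans.mono_of_mono_app κ
  haveI : Mono (colim.map κ) := (colim (J := J) (C := C)).map_mono κ
  set isoA : colimit ((Functor.const J).obj A) ≅ A :=
    (colimit.isColimit _).coconePointUniqueUpToIso (constCoconeIsColimit A) with hisoA
  have hcompA : ∀ j, colimit.ι ((Functor.const J).obj A) j ≫ isoA.hom = 𝟙 A := fun j =>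
    (colimit.isColimit _).comp_coconePointUniqueUpToIso_hom (constCoconeIsColimit A) j
  have key : a ≫ cokernel.π w = isoA.inv ≫ colim.map κ ≫ isoQ.hom := by
    rw [Iso.eq_inv_comp]
    apply colimit.hom_ext
    intro j
    have h1 : (colim.map κ : colimit _ ⟶ colimit Q) = colimMap κ := rfl
    have lhs : colimit.ι ((Functor.const J).obj A) j ≫ isoA.hom ≫ (a ≫ cokernel.π w) =
        a ≫ cokernel.π w := by
      rw [← assoc, hcompA j]
      exact id_comp _
    have rhs : colimit.ι ((Functor.const J).obj A) j ≫ colim.map κ ≫ isoQ.hom =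
        a ≫ cokernel.π w := by
      rw [h1, ← assoc, ι_colimMap, assoc, hcompQ j]
      show (a ≫ cokernel.π (τ.app j)) ≫ QC.ι.app j = a ≫ cokernel.π w
      rw [assoc, hQCπ j]
    rw [lhs, rhs]
  rw [key]
  haveI : Mono (colim.map κ ≫ isoQ.hom) := mono_comp _ _
  exact mono_comp _ _

end AB5Chain

end AtomProof

namespace AtomProof

section ChainUB

variable {C : Type u} [Category.{v} C] [Abelian C]
variable [HasFilteredColimits C] [AB5 C] [WellPowered.{v} C]

/-- Every chain of subobjects disjoint from `a` has an upper bound disjoint from `a`. -/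
lemma subobject_chain_ub {E : C} (c : Set (Subobject E)) (hchain : IsChain (· ≤ ·) c)
    (hne : c.Nonempty) :
    ∃ W : Subobject E, (∀ D ∈ c, D ≤ W) ∧
      ∀ ⦃A : C⦄ (a : A ⟶ E),
        (∀ D ∈ c, Mono (a ≫ cokernel.π D.arrow)) → Mono (a ≫ cokernel.π W.arrow) := by
  haveI hne' : Nonempty (↥c) := hne.to_subtype
  haveI : IsDirected (↥c) (· ≤ ·) := by
    constructor
    intro x y
    rcases eq_or_ne x y with rfl | hxy
    · exact ⟨x, le_refl _, le_refl _⟩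
    · rcases hchain.total x.2 y.2 with h | h
      · exact ⟨y, h, le_refl _⟩
      · exact ⟨x, le_refl _, h⟩
  haveI : Small.{v} (↥c) := small_of_injective (Subtype.val_injective)
  haveI : EssentiallySmall.{v} (↥c) := essentiallySmall_of_small_of_locallySmall _
  let J := SmallModel.{v} (↥c)
  let eqv : ↥c ≌ J := equivSmallModel.{v} (↥c)
  haveI : IsFiltered (↥c) := inferInstance
  haveI : IsFiltered J := IsFiltered.of_equivalence eqv
  let F₀ : ↥c ⥤ C :=
    (Monotone.functor (f := fun x : ↥c => (x : Subobject E)) fun _ _ h => h) ⋙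
      Subobject.underlying
  let F : J ⥤ C := eqv.inverse ⋙ F₀
  let τ : F ⟶ (Functor.const J).obj E :=
    { app := fun j => ((eqv.inverse.obj j : ↥c) : Subobject E).arrow
      naturality := fun j k f => by
        show F.map f ≫ _ = _ ≫ ((Functor.const J).obj E).map f
        have e : F.map f ≫ ((eqv.inverse.obj k : ↥c) : Subobject E).arrow =
            ((eqv.inverse.obj j : ↥c) : Subobject E).arrow :=
          Subobject.underlying_arrow _
        rw [e]
        exact (comp_id _).symm }
  have hτ : ∀ j, Mono (τ.app j) := fun j => Subobject.arrow_mono _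
  have hMw : Mono (colimit.desc F ⟨E, τ⟩) := ab5_mono_desc F τ hτ
  haveI := hMw
  set w := colimit.desc F ⟨E, τ⟩ with hwdef
  have harr : (Subobject.mk w).arrow = (Subobject.underlyingIso w).hom ≫ w :=
    (Subobject.underlyingIso_hom_comp_eq_mk w).symm
  have hval : ∀ D (hD : D ∈ c), ∃ j : J, ((eqv.inverse.obj j : ↥c) : Subobject E) = D := by
    intro D hD
    refine ⟨eqv.functor.obj ⟨D, hD⟩, ?_⟩
    have h1 : (⟨D, hD⟩ : ↥c) ≤ eqv.inverse.obj (eqv.functor.obj ⟨D, hD⟩) :=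
      leOfHom (eqv.unit.app ⟨D, hD⟩)
    have h2 : eqv.inverse.obj (eqv.functor.obj ⟨D, hD⟩) ≤ (⟨D, hD⟩ : ↥c) :=
      leOfHom (eqv.unitInv.app ⟨D, hD⟩)
    have := le_antisymm h2 h1
    exact congrArg Subtype.val this
  refine ⟨Subobject.mk w, ?_, ?_⟩
  · intro D hD
    obtain ⟨j, hj⟩ := hval D hD
    rw [← hj]
    exact Subobject.le_mk_of_comm (colimit.ι F j) (colimit.ι_desc _ _)
  · intro A a ha
    have hdisj : ∀ j, Mono (a ≫ cokernel.π (τ.app j)) := by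
      intro j
      exact ha ((eqv.inverse.obj j : ↥c) : Subobject E) (eqv.inverse.obj j : ↥c).2
    have hcore : Mono (a ≫ cokernel.π w) := ab5_disjoint_desc F τ hτ a hdisj
    exact (mono_comp_cokernelπ_congr a w (Subobject.mk w).arrow
      (Subobject.underlyingIso w) (Subobject.underlyingIso_hom_comp_eq_mk w)).1 hcore

end ChainUB

end AtomProof

namespace AtomProof

section Noeth

variable {C : Type u} [Category.{v} C] [Abelian C]

/-- Quotients of noetherian objects are noetherian. -/
lemma noetherianObject_of_epi {G X : C} (q : G ⟶ X) [Epi q] (hG : IsNoetherianObject G) :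
    IsNoetherianObject X := by
  haveI := hG
  let m : Subobject X → Subobject G := fun S => Subobject.mk (pullback.snd S.arrow q)
  have hmono : ∀ {S T : Subobject X}, S ≤ T → m S ≤ m T := by
    intro S T h
    refine Subobject.mk_le_mk_of_comm
      (pullback.lift (pullback.fst S.arrow q ≫ Subobject.ofLE S T h) (pullback.snd S.arrow q)
        (by rw [assoc, Subobject.ofLE_arrow]; exact pullback.condition)) ?_
    exact pullback.lift_snd _ _ _
  have hrefl : ∀ {S T : Subobject X}, m S ≤ m T → S ≤ T := by
    intro S T h
    have hk := Subobject.ofMkLEMk_comp h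
    set k := Subobject.ofMkLEMk (pullback.snd S.arrow q) (pullback.snd T.arrow q) h with hkdef
    have h0 : kernel.ι (pullback.fst S.arrow q) ≫ (k ≫ pullback.fst T.arrow q) = 0 := by
      rw [← cancel_mono T.arrow]
      calc (kernel.ι (pullback.fst S.arrow q) ≫ (k ≫ pullback.fst T.arrow q)) ≫ T.arrow
          = kernel.ι (pullback.fst S.arrow q) ≫ k ≫ (pullback.fst T.arrow q ≫ T.arrow) := by
            simp only [assoc]
        _ = kernel.ι (pullback.fst S.arrow q) ≫ k ≫ (pullback.snd T.arrow q ≫ q) := by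
            rw [pullback.condition]
        _ = kernel.ι (pullback.fst S.arrow q) ≫ (k ≫ pullback.snd T.arrow q) ≫ q := by
            simp only [assoc]
        _ = kernel.ι (pullback.fst S.arrow q) ≫ pullback.fst S.arrow q ≫ S.arrow := by
            rw [hk, pullback.condition]
        _ = 0 ≫ T.arrow := by rw [← assoc, kernel.condition, zero_comp, zero_comp]
    have hl := Abelian.comp_epiDesc (pullback.fst S.arrow q) (k ≫ pullback.fst T.arrow q) h0
    apply Subobject.le_of_comm (Abelian.epiDesc (pullback.fst S.arrow q) _ h0)
    rw [← cancel_epi (pullback.fst S.arrow q), ← assoc, hl, assoc, pullback.condition,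
      ← assoc, hk, pullback.condition]
  have hwf : WellFounded ((· > ·) : Subobject X → Subobject X → Prop) := by
    have hinv : WellFounded (fun S T : Subobject X => m S > m T) :=
      InvImage.wf m (wellFounded_gt (α := Subobject G))
    refine Subrelation.wf ?_ hinv
    intro S T hST
    exact lt_of_le_not_ge (hmono hST.le) (fun h => hST.not_ge (hrefl h))
  exact ⟨⟨hwf⟩⟩

/-- Every nonzero noetherian object has a nonzero monoform subobject. -/
lemma exists_monoform_subobject {X : C} (hN : IsNoetherianObject X) (hX : ¬ IsZero X) :
    ∃ (I : C) (mI : I ⟶ X), Mono mI ∧ ¬ IsZero I ∧ Monoform I := by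
  classical
  let T : Set (Subobject X) := {K | ∃ (H : C) (η f : H ⟶ X) (hη : Mono η)
    (hc : Mono (kernel.ι f ≫ η)), f ≠ 0 ∧ K = @Subobject.mk _ _ _ _ (kernel.ι f ≫ η) hc}
  have hTne : T.Nonempty := by
    refine ⟨Subobject.mk (kernel.ι (𝟙 X) ≫ 𝟙 X), X, 𝟙 X, 𝟙 X, inferInstance, inferInstance,
      ?_, rfl⟩
    intro h
    exact hX ((IsZero.iff_id_eq_zero _).mpr h)
  obtain ⟨K, hKT, hKmax⟩ := (haveI := hN; wellFounded_gt (α := Subobject X)).has_min T hTne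
  obtain ⟨H, η, f, hηM, hcM, hf0, hKeq⟩ := hKT
  haveI := hηM
  refine ⟨image f, image.ι f, inferInstance, ?_, ?_⟩
  · intro h
    apply hf0
    rw [← image.fac f, h.eq_zero_of_src (image.ι f), comp_zero]
  · intro L j hj g hg0
    by_contra hgM
    haveI := hj
    have hker : ¬ IsZero (kernel g) := fun hz => hgM (Preadditive.mono_of_isZero_kernel g hz)
    -- set up the larger kernel
    set e := factorThruImage f with hedef
    set P := pullback j e with hPdef
    set η' : P ⟶ X := pullback.snd j e ≫ η with hη'def
    set f' : P ⟶ X := pullback.fst j e ≫ g ≫ image.ι f with hf'def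
    haveI : Mono η' := mono_comp _ _
    have hf'0 : f' ≠ 0 := by
      intro h0
      apply hg0
      have h1 : pullback.fst j e ≫ (g ≫ image.ι f) = pullback.fst j e ≫ 0 := by
        rw [comp_zero, ← h0, hf'def]
      have h2 : g ≫ image.ι f = 0 := by
        rw [← cancel_epi (pullback.fst j e), h1, comp_zero]
      exact zero_of_comp_mono (image.ι f) h2
    have hKe : kernel.ι f ≫ e = 0 := by
      rw [← cancel_mono (image.ι f), assoc, hedef, image.fac, kernel.condition, zero_comp]
    have hξw : (0 : kernel f ⟶ L) ≫ j = kernel.ι f ≫ e := by rw [zero_comp, hKe]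
    set ξ : kernel f ⟶ P := pullback.lift 0 (kernel.ι f) hξw with hξdef
    have hξf' : ξ ≫ f' = 0 := by
      rw [hf'def, ← assoc, hξdef, pullback.lift_fst, zero_comp]
    set χ : kernel f ⟶ kernel f' := kernel.lift f' ξ hξf' with hχdef
    have hχι : χ ≫ kernel.ι f' = ξ := kernel.lift_ι _ _ _
    haveI : Mono (kernel.ι f' ≫ η') := mono_comp _ _
    have hle1 : K ≤ Subobject.mk (kernel.ι f' ≫ η') := by
      rw [hKeq]
      refine Subobject.mk_le_mk_of_comm χ ?_
      rw [← assoc, hχι, hη'def, ← assoc, hξdef, pullback.lift_snd]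
    have hK'T : Subobject.mk (kernel.ι f' ≫ η') ∈ T :=
      ⟨P, η', f', inferInstance, inferInstance, hf'0, rfl⟩
    have hle2 : Subobject.mk (kernel.ι f' ≫ η') ≤ K := by
      by_contra hcon
      exact hKmax _ hK'T (lt_of_le_not_ge hle1 hcon)
    have hle2' : Subobject.mk (kernel.ι f' ≫ η') ≤ Subobject.mk (kernel.ι f ≫ η) := by
      rw [← hKeq]; exact hle2
    have hk := Subobject.ofMkLEMk_comp hle2'
    set k := Subobject.ofMkLEMk (kernel.ι f' ≫ η') (kernel.ι f ≫ η) hle2' with hkdef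
    have hsnd : kernel.ι f' ≫ pullback.snd j e = k ≫ kernel.ι f := by
      rw [← cancel_mono η, assoc, assoc]
      rw [hη'def] at hk
      rw [← assoc, ← assoc] at hk
      rw [← assoc, ← assoc]
      exact hk.symm
    have hfst : kernel.ι f' ≫ pullback.fst j e = 0 := by
      have h1 : (kernel.ι f' ≫ pullback.fst j e) ≫ j = 0 := by
        rw [assoc, pullback.condition, ← assoc, hsnd, assoc, hKe, comp_zero]
      exact zero_of_comp_mono j h1
    set Pq := pullback (kernel.ι g) (pullback.fst j e) with hPqdef
    have hsq : pullback.snd (kernel.ι g) (pullback.fst j e) ≫ f' = 0 := by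
      rw [hf'def, ← assoc, ← pullback.condition, assoc, kernel.condition_assoc, zero_comp,
        comp_zero]
    set lq : Pq ⟶ kernel f' := kernel.lift f' _ hsq with hlqdef
    have hlι : lq ≫ kernel.ι f' = pullback.snd (kernel.ι g) (pullback.fst j e) :=
      kernel.lift_ι _ _ _
    have h0 : pullback.fst (kernel.ι g) (pullback.fst j e) ≫ kernel.ι g = 0 := by
      rw [pullback.condition, ← hlι, assoc, hfst, comp_zero]
    have hq0 : pullback.fst (kernel.ι g) (pullback.fst j e) = 0 :=
      zero_of_comp_mono (kernel.ι g) h0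
    have hid : 𝟙 (kernel g) = 0 := by
      rw [← cancel_epi (pullback.fst (kernel.ι g) (pullback.fst j e)), comp_id, comp_zero]
      exact hq0
    exact hker ((IsZero.iff_id_eq_zero _).mpr hid)

end Noeth

end AtomProof

namespace AtomProof

section Essential

variable {C : Type u} [Category.{v} C] [Abelian C]

/-- A split mono exhibits its target as a biproduct. -/
lemma biprod_iso_of_retract {A E : C} (i : A ⟶ E) (r : E ⟶ A) (hir : i ≫ r = 𝟙 A) :
    Nonempty (E ≅ A ⊞ cokernel i) := by
  have hcond : i ≫ (𝟙 E - r ≫ i) = 0 := by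
    rw [Preadditive.comp_sub, comp_id, ← assoc, hir, id_comp, sub_self]
  set σ : cokernel i ⟶ E := cokernel.desc i (𝟙 E - r ≫ i) hcond with hσdef
  have hπσ : cokernel.π i ≫ σ = 𝟙 E - r ≫ i := cokernel.π_desc _ _ _
  have hσπ : σ ≫ cokernel.π i = 𝟙 (cokernel i) := by
    rw [← cancel_epi (cokernel.π i), ← assoc, hπσ, Preadditive.sub_comp, id_comp, comp_id,
      assoc, cokernel.condition, comp_zero, sub_zero]
  have hσr : σ ≫ r = 0 := by
    rw [← cancel_epi (cokernel.π i), ← assoc, hπσ, Preadditive.sub_comp, id_comp, comp_zero,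
      assoc, hir, comp_id, sub_self]
  refine ⟨⟨biprod.lift r (cokernel.π i), biprod.desc i σ, ?_, ?_⟩⟩
  · rw [biprod.lift_desc, hπσ]
    abel
  · apply biprod.hom_ext'
    · rw [← assoc, biprod.inl_desc]
      apply biprod.hom_ext
      · simp [hir]
      · simp [cokernel.condition]
    · rw [← assoc, biprod.inr_desc]
      apply biprod.hom_ext
      · simp [hσr]
      · simp [hσπ]

/-- `A` is an essential subobject of `M` (both subobjects of `E`). -/
def EssAt {E : C} (A M : Subobject E) : Prop :=
  A ≤ M ∧ ∀ ⦃T : C⦄ (t : T ⟶ (M : C)), Mono t → ¬ IsZero T →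
    ∃ (S : C) (s₁ : S ⟶ (A : C)) (s₂ : S ⟶ T), ¬ IsZero S ∧ Mono s₁ ∧
      s₁ ≫ A.arrow = s₂ ≫ t ≫ M.arrow

/-- If `Cm` is a maximal complement of `Abar`, then the image of `Abar` in `E/Cm` is
essential. -/
lemma quotient_meets {E : C} {Abar Cm : Subobject E}
    (hC : Mono (Abar.arrow ≫ cokernel.π Cm.arrow))
    (hmax : ∀ D : Subobject E, Cm ≤ D → Mono (Abar.arrow ≫ cokernel.π D.arrow) → D ≤ Cm) :
    ∀ ⦃B : C⦄ (b : B ⟶ cokernel Cm.arrow), Mono b → ¬ IsZero B →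
      Meets (Abar.arrow ≫ cokernel.π Cm.arrow) b := by
  intro B b hb hB
  haveI := hb
  have hCle : Cm ≤ Subobject.mk (pullback.snd b (cokernel.π Cm.arrow)) := by
    refine Subobject.le_mk_of_comm (pullback.lift 0 Cm.arrow ?_) ?_
    · rw [zero_comp, cokernel.condition]
    · exact pullback.lift_snd _ _ _
  have hnm : ¬ Mono (Abar.arrow ≫
      cokernel.π (Subobject.mk (pullback.snd b (cokernel.π Cm.arrow))).arrow) := by
    intro hM
    have hle := hmax _ hCle hM
    have hcomp := Subobject.ofMkLE_arrow (f := pullback.snd b (cokernel.π Cm.arrow)) hle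
    have h1 : pullback.snd b (cokernel.π Cm.arrow) ≫ cokernel.π Cm.arrow = 0 := by
      rw [← hcomp, assoc, cokernel.condition, comp_zero]
    have h2 : pullback.fst b (cokernel.π Cm.arrow) ≫ b = 0 := by
      rw [pullback.condition, h1]
    have h3 : pullback.fst b (cokernel.π Cm.arrow) = 0 := zero_of_comp_mono b h2
    apply hB
    rw [IsZero.iff_id_eq_zero, ← cancel_epi (pullback.fst b (cokernel.π Cm.arrow)), comp_id,
      comp_zero]
    exact h3
  have hnm' : ¬ Mono (Abar.arrow ≫ cokernel.π (pullback.snd b (cokernel.π Cm.arrow))) := by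
    intro hM
    exact hnm ((mono_comp_cokernelπ_congr Abar.arrow (pullback.snd b (cokernel.π Cm.arrow)) _
      (Subobject.underlyingIso _) (Subobject.underlyingIso_hom_comp_eq_mk _)).1 hM)
  have hPz : ¬ IsZero (pullback Abar.arrow (pullback.snd b (cokernel.π Cm.arrow))) := fun hz =>
    hnm' (mono_comp_cokernelπ_of_isZero_pullback _ _ hz)
  refine ⟨pullback Abar.arrow (pullback.snd b (cokernel.π Cm.arrow)), pullback.fst _ _,
    pullback.snd _ _ ≫ pullback.fst b (cokernel.π Cm.arrow), hPz, inferInstance, ?_⟩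
  rw [← assoc, pullback.condition, assoc, ← pullback.condition, assoc]

variable [HasFilteredColimits C] [AB5 C] [WellPowered.{v} C]

/-- In an indecomposable injective, every nonzero subobject is essential. -/
lemma essential_of_indec {E : C} (hE : Injective E) (hInd : IndecomposableObj E)
    {A : C} (a : A ⟶ E) [Mono a] (hA : ¬ IsZero A) :
    ∀ ⦃Y : C⦄ (g : E ⟶ Y), Mono (a ≫ g) → Mono g := by
  haveI := hE
  set A₀ := Subobject.mk a with hA₀def
  have hA₀obj : ¬ IsZero ((A₀ : C)) := fun h => hA (h.of_iso (Subobject.underlyingIso a).symm)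
  have hself : EssAt A₀ A₀ := by
    refine ⟨le_refl _, ?_⟩
    intro T t ht hT
    exact ⟨T, t, 𝟙 T, hT, ht, by rw [id_comp]⟩
  obtain ⟨Abar, hA₀Abar, hAbarMax⟩ :=
    zorn_le_nonempty₀ {M : Subobject E | EssAt A₀ M} (fun c hcs hchain y hy => by
      obtain ⟨W, hub, hWgen⟩ := subobject_chain_ub c hchain ⟨y, hy⟩
      refine ⟨W, ⟨le_trans (hcs hy).1 (hub y hy), ?_⟩, hub⟩
      intro T t ht hT
      haveI := ht
      have hex : ∃ D ∈ c, ¬ Mono ((t ≫ W.arrow) ≫ cokernel.π D.arrow) := by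
        by_contra hall
        push_neg at hall
        have hm := hWgen (t ≫ W.arrow) (fun D hD => hall D hD)
        have h0 : (t ≫ W.arrow) ≫ cokernel.π W.arrow = 0 := by
          rw [assoc, cokernel.condition, comp_zero]
        exact hT (isZero_of_mono_eq_zero _ hm h0)
      obtain ⟨D, hD, hnm⟩ := hex
      haveI : Mono (t ≫ W.arrow) := mono_comp _ _
      have hPz : ¬ IsZero (pullback (t ≫ W.arrow) D.arrow) := fun hz =>
        hnm (mono_comp_cokernelπ_of_isZero_pullback _ _ hz)
      obtain ⟨S, s₁, s₂, hS, hs₁, hcomm⟩ :=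
        (hcs hD).2 (pullback.snd (t ≫ W.arrow) D.arrow) inferInstance hPz
      refine ⟨S, s₁, s₂ ≫ pullback.fst (t ≫ W.arrow) D.arrow, hS, hs₁, ?_⟩
      calc s₁ ≫ A₀.arrow
          = s₂ ≫ pullback.snd (t ≫ W.arrow) D.arrow ≫ D.arrow := hcomm
        _ = s₂ ≫ pullback.fst (t ≫ W.arrow) D.arrow ≫ (t ≫ W.arrow) := by
            rw [← pullback.condition]
        _ = (s₂ ≫ pullback.fst (t ≫ W.arrow) D.arrow) ≫ t ≫ W.arrow := by
            simp only [assoc]) A₀ hself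
  obtain ⟨hAbarSet, hAbarM⟩ := hAbarMax
  have hbot : Mono (Abar.arrow ≫ cokernel.π (⊥ : Subobject E).arrow) := by
    rw [Subobject.bot_arrow]
    exact mono_comp _ _
  obtain ⟨Cm, hCmSet, hCmM⟩ :=
    zorn_le₀ {D : Subobject E | Mono (Abar.arrow ≫ cokernel.π D.arrow)} (fun c hcs hchain => by
      rcases c.eq_empty_or_nonempty with rfl | hcne
      · exact ⟨⊥, hbot, fun z hz => absurd hz (Set.notMem_empty z)⟩
      · obtain ⟨W, hub, hWgen⟩ := subobject_chain_ub c hchain hcne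
        exact ⟨W, hWgen Abar.arrow (fun D hD => hcs hD), hub⟩)
  have hCm : Mono (Abar.arrow ≫ cokernel.π Cm.arrow) := hCmSet
  have hmeets := quotient_meets hCm (fun D hle hm => hCmM hm hle)
  have hess : ∀ ⦃Y' : C⦄ (g' : cokernel Cm.arrow ⟶ Y'),
      Mono ((Abar.arrow ≫ cokernel.π Cm.arrow) ≫ g') → Mono g' :=
    essential_of_meets _ hmeets
  haveI : Mono (Abar.arrow ≫ cokernel.π Cm.arrow) := hCm
  set φ : cokernel Cm.arrow ⟶ E :=
    Injective.factorThru Abar.arrow (Abar.arrow ≫ cokernel.π Cm.arrow) with hφdef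
  have hφ : (Abar.arrow ≫ cokernel.π Cm.arrow) ≫ φ = Abar.arrow :=
    Injective.comp_factorThru _ _
  have hφM : Mono φ := hess φ (by rw [hφ]; exact inferInstance)
  haveI := hφM
  have hAbarV : Abar ≤ Subobject.mk φ := Subobject.le_mk_of_comm _ hφ
  have hVSet : EssAt A₀ (Subobject.mk φ) := by
    refine ⟨le_trans hA₀Abar hAbarV, ?_⟩
    intro T t ht hT
    haveI := ht
    have hmk : (Subobject.underlyingIso φ).hom ≫ φ = (Subobject.mk φ).arrow :=
      Subobject.underlyingIso_hom_comp_eq_mk φ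
    obtain ⟨S, s₁, s₂, hS, hs₁, hcomm⟩ :=
      hmeets (t ≫ (Subobject.underlyingIso φ).hom) (mono_comp _ _) hT
    obtain ⟨S', σ₁, σ₂, hS', hσ₁, hcomm'⟩ := hAbarSet.2 s₁ hs₁ hS
    refine ⟨S', σ₁, σ₂ ≫ s₂, hS', hσ₁, ?_⟩
    calc σ₁ ≫ A₀.arrow
        = σ₂ ≫ s₁ ≫ Abar.arrow := hcomm'
      _ = σ₂ ≫ s₁ ≫ (Abar.arrow ≫ cokernel.π Cm.arrow) ≫ φ := by rw [hφ]
      _ = σ₂ ≫ (s₁ ≫ (Abar.arrow ≫ cokernel.π Cm.arrow)) ≫ φ := by simp only [assoc]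
      _ = σ₂ ≫ (s₂ ≫ t ≫ (Subobject.underlyingIso φ).hom) ≫ φ := by rw [hcomm]
      _ = (σ₂ ≫ s₂) ≫ t ≫ (Subobject.mk φ).arrow := by rw [← hmk]; simp only [assoc]
  have hVAbar : Subobject.mk φ ≤ Abar := hAbarM hVSet hAbarV
  have hk : Subobject.ofMkLE φ Abar hVAbar ≫ Abar.arrow = φ := Subobject.ofMkLE_arrow hVAbar
  have hek : (Abar.arrow ≫ cokernel.π Cm.arrow) ≫ Subobject.ofMkLE φ Abar hVAbar =
      𝟙 ((Abar : C)) := by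
    rw [← cancel_mono Abar.arrow, assoc, hk, hφ, id_comp]
  have hretr : Abar.arrow ≫ (cokernel.π Cm.arrow ≫ Subobject.ofMkLE φ Abar hVAbar) =
      𝟙 ((Abar : C)) := by
    rw [← assoc]; exact hek
  obtain ⟨iso⟩ := biprod_iso_of_retract Abar.arrow _ hretr
  rcases hInd.2 _ _ ⟨iso⟩ with hz | hz
  · exfalso
    apply hA₀obj
    have h0 : Subobject.ofLE A₀ Abar hA₀Abar = 0 := hz.eq_zero_of_tgt _
    have h1 : A₀.arrow = 0 := by
      rw [← Subobject.ofLE_arrow hA₀Abar, h0, zero_comp]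
    exact isZero_of_mono_eq_zero A₀.arrow inferInstance h1
  · have hepi : Epi Abar.arrow := by
      refine Preadditive.epi_of_cancel_zero _ ?_
      intro R g' hg'
      have h1 : g' = cokernel.π Abar.arrow ≫ cokernel.desc _ g' hg' :=
        (cokernel.π_desc _ _ _).symm
      have h2 : cokernel.π Abar.arrow = 0 := hz.eq_zero_of_tgt _
      rw [h1, h2, zero_comp]
    haveI := hepi
    haveI : IsIso Abar.arrow := isIso_of_mono_of_epi _
    apply essential_of_meets a
    intro B jB hjB hB
    haveI := hjB
    have ht : Mono (jB ≫ inv Abar.arrow) := mono_comp _ _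
    obtain ⟨S, s₁, s₂, hS, hs₁, hcomm⟩ := hAbarSet.2 (jB ≫ inv Abar.arrow) ht hB
    refine ⟨S, s₁ ≫ (Subobject.underlyingIso a).hom, s₂, hS, mono_comp _ _, ?_⟩
    rw [assoc, Subobject.underlyingIso_hom_comp_eq_mk, hcomm]
    simp

end Essential

end AtomProof

/-- For a locally noetherian Grothendieck category, the map from the atom spectrum to the
set of isomorphism classes of indecomposable injective objects, sending the atom `[X]` of
a monoform object `X` to its injective envelope `E(X)`, is a bijection: it is injective
(two monoform objects are atom-equivalent iff their injective envelopes are isomorphic)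
and surjective (every indecomposable injective is the injective envelope of a monoform
object). -/
theorem atomSpectrum_equiv_indecomposable_injectives
    {C : Type u} [Category.{v} C] [Abelian C] [GrothendieckCategory C]
    (hln : LocallyNoetherian C) :
    (∀ (X X' E E' : C) (u : X ⟶ E) (u' : X' ⟶ E'),
      Monoform X → ¬ IsZero X → Monoform X' → ¬ IsZero X' →
      IsInjectiveEnvelope u → IsInjectiveEnvelope u' →
      (AtomEquiv X X' ↔ Nonempty (E ≅ E'))) ∧
    (∀ E : C, Injective E → IndecomposableObj E →
      ∃ (X : C) (u : X ⟶ E), Monoform X ∧ ¬ IsZero X ∧ IsInjectiveEnvelope u) := by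
  haveI := GrothendieckCategory.hasColimits (C := C)
  haveI := GrothendieckCategory.hasFilteredColimits (C := C)
  haveI := GrothendieckCategory.ab5 (C := C)
  haveI := GrothendieckCategory.hasSeparator (C := C)
  haveI : WellPowered.{v} C := inferInstance
  constructor
  · intro X X' E E' u u' hX hX0 hX' hX'0 hu hu'
    exact AtomProof.part1 u u' hX hX0 hX' hX'0 hu hu'
  · intro E hE hInd
    obtain ⟨𝒢, hsep, hnoe⟩ := hln
    have hEAll : ¬ ∀ G ∈ 𝒢, ∀ h : G ⟶ E, h = 0 := by
      intro hall
      apply hInd.1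
      rw [CategoryTheory.Limits.IsZero.iff_id_eq_zero]
      apply hsep
      intro G hG h
      rw [hall G hG h, zero_comp, zero_comp]
    push_neg at hEAll
    obtain ⟨G, hG, h, hh0⟩ := hEAll
    haveI : IsNoetherianObject G := hnoe G hG
    have hXN : IsNoetherianObject (image h) :=
      AtomProof.noetherianObject_of_epi (factorThruImage h) inferInstance
    have hX0 : ¬ IsZero (image h) := by
      intro hz
      apply hh0
      rw [← image.fac h, hz.eq_zero_of_tgt (factorThruImage h), zero_comp]
    obtain ⟨I, mI, hmI, hI0, hIm⟩ := AtomProof.exists_monoform_subobject hXN hX0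
    haveI := hmI
    haveI : Mono (mI ≫ image.ι h) := mono_comp _ _
    exact ⟨I, mI ≫ image.ι h, hIm, hI0, hE, inferInstance,
      AtomProof.essential_of_indec hE hInd (mI ≫ image.ι h) hI0⟩
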